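/- Let 0<p<∞ and φ∈𝒢_p(𝔻) with sup_k φ(2^k)=∞ and lim_{k→∞} 2^{−kd/p}φ(2^k) = 0. Then there exists a sequence λ∈c₀(ℤ^d) (tending to zero) that does not belong to m_{φ,p}(ℤ^d), and there exists a 0–1 valued sequence μ∈m_{φ,p}(ℤ^d) that is not in c(ℤ^d). Hence m_{φ,p}(ℤ^d) and c₀(ℤ^d) (resp. c(ℤ^d)) are incomparable. -/

import Mathlib

open ENNReal Filter

noncomputable section

/-- `Q_{0,k} ⊂ Q_{-j,m}` for dyadic cubes `Q_{-j,m} = 2^j([0,1)^d + m)`. -/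
def inCube (d j : ℕ) (m k : Fin d → ℤ) : Prop :=
  ∀ i, 2 ^ j * m i ≤ k i ∧ k i < 2 ^ j * (m i + 1)

/-- the local quantity `(Σ_{k : Q_{0,k} ⊂ Q_{-j,m}} |λ_k|^p)^{1/p}`, in `ℝ≥0∞`. -/
def localSum (d : ℕ) (p : ℝ) (j : ℕ) (m : Fin d → ℤ)
    (lam : (Fin d → ℤ) → ℂ) : ℝ≥0∞ :=
  (∑' k : {k : Fin d → ℤ // inCube d j m k}, ENNReal.ofReal ‖lam k.1‖ ^ p) ^ (1 / p)

/-- quasi-norm of the generalised Morrey sequence space `m_{φ,p}(ℤ^d)`;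
`φ j` stands for `φ(2^j)`. -/
def mNorm (d : ℕ) (p : ℝ) (φ : ℕ → ℝ) (lam : (Fin d → ℤ) → ℂ) : ℝ≥0∞ :=
  ⨆ (j : ℕ) (m : Fin d → ℤ),
    ENNReal.ofReal (φ j) * (2 : ℝ≥0∞) ^ (-((j : ℝ) * d) / p) * localSum d p j m lam

def ellpNorm (d : ℕ) (p : ℝ) (lam : (Fin d → ℤ) → ℂ) : ℝ≥0∞ :=
  (∑' k : Fin d → ℤ, ENNReal.ofReal ‖lam k‖ ^ p) ^ (1 / p)

def linftyNorm (d : ℕ) (lam : (Fin d → ℤ) → ℂ) : ℝ≥0∞ :=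
  ⨆ k : Fin d → ℤ, ENNReal.ofReal ‖lam k‖

/-- the class `𝒢_p(𝔻)`: `φ(2^k)` is positive, nondecreasing and
`2^{-kd/p} φ(2^k)` is nonincreasing. -/
def Gp (d : ℕ) (p : ℝ) (φ : ℕ → ℝ) : Prop :=
  (∀ k, 0 < φ k) ∧
  ∀ j k : ℕ, j ≤ k → φ j ≤ φ k ∧ φ k ≤ φ j * 2 ^ (((k : ℝ) - j) * d / p)

-- auxiliary constructions and lemmas


def mvec (d j : ℕ) : Fin d → ℤ := fun i => if i.val = 0 then 2 ^ j else 0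

lemma cube_uniq {d : ℕ} (hd : 0 < d) {j j' : ℕ} {k : Fin d → ℤ}
    (h : inCube d j (mvec d j) k) (h' : inCube d j' (mvec d j') k) : j = j' := by
  have key : ∀ a b : ℕ, a < b → inCube d a (mvec d a) k → inCube d b (mvec d b) k → False := by
    intro a b hab ha hb
    have h1 := ha ⟨0, hd⟩
    have h2 := hb ⟨0, hd⟩
    simp only [mvec, if_pos rfl, if_true, eq_self_iff_true] at h1 h2
    norm_num at h1 h2
    have e1 : (1:ℤ) ≤ 2 ^ a := one_le_pow₀ (by norm_num)
    have e2 : (2:ℤ) ^ (a+1) ≤ 2 ^ b := pow_le_pow_right₀ (by norm_num) hab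
    rw [pow_succ] at e2
    nlinarith [h1.1, h1.2, h2.1, h2.2]
  rcases lt_trichotomy j j' with h1 | h1 | h1
  · exact absurd (key j j' h1 h h') (by simp)
  · exact h1
  · exact absurd (key j' j h1 h' h) (by simp)

open Classical in
def lam1 (d : ℕ) (φ : ℕ → ℝ) : (Fin d → ℤ) → ℂ :=
  fun k => if h : ∃ j, inCube d j (mvec d j) k
    then (((Real.sqrt (φ (Nat.find h)))⁻¹ : ℝ) : ℂ) else 0

lemma lam1_of_mem {d : ℕ} (hd : 0 < d) (φ : ℕ → ℝ) {j : ℕ} {k : Fin d → ℤ}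
    (hk : inCube d j (mvec d j) k) :
    lam1 d φ k = (((Real.sqrt (φ j))⁻¹ : ℝ) : ℂ) := by
  classical
  have hex : ∃ j', inCube d j' (mvec d j') k := ⟨j, hk⟩
  rw [lam1, dif_pos hex]
  have : Nat.find hex = j := cube_uniq hd (Nat.find_spec hex) hk
  rw [this]

lemma cube_finite (d j : ℕ) (m : Fin d → ℤ) : {k : Fin d → ℤ | inCube d j m k}.Finite := by
  have hsub : {k : Fin d → ℤ | inCube d j m k} ⊆
      Set.univ.pi (fun i => Set.Ico (2 ^ j * m i) (2 ^ j * (m i + 1))) := by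
    intro k hk i _
    exact ⟨(hk i).1, (hk i).2⟩
  exact (Set.Finite.pi fun i => Set.finite_Ico _ _).subset hsub

lemma lam1_tendsto {d : ℕ} (hd : 0 < d) (φ : ℕ → ℝ) (hpos : ∀ k, 0 < φ k)
    (hmono : ∀ j k : ℕ, j ≤ k → φ j ≤ φ k) (hunb : ∀ C : ℝ, ∃ k, C < φ k) :
    Tendsto (lam1 d φ) cofinite (nhds 0) := by
  rw [tendsto_nhds]
  intro s hs hmem
  rw [Filter.mem_cofinite]
  have hcompl : (lam1 d φ ⁻¹' s)ᶜ = {k : Fin d → ℤ | lam1 d φ k ∉ s} := rfl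
  rw [hcompl]
  obtain ⟨ε, hε, hball⟩ := Metric.isOpen_iff.1 hs 0 hmem
  obtain ⟨N, hN⟩ := hunb ((ε⁻¹)^2)
  have hsub : {k : Fin d → ℤ | lam1 d φ k ∉ s} ⊆
      ⋃ j ∈ Finset.range (N+1), {k : Fin d → ℤ | inCube d j (mvec d j) k} := by
    intro k hk
    have hne : lam1 d φ k ≠ 0 := by
      intro h0
      exact hk (h0 ▸ hmem)
    have hex : ∃ j, inCube d j (mvec d j) k := by
      by_contra hcon
      rw [lam1, dif_neg hcon] at hne
      exact hne rfl
    obtain ⟨j, hj⟩ := hex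
    have hval : lam1 d φ k = (((Real.sqrt (φ j))⁻¹ : ℝ) : ℂ) := lam1_of_mem hd φ hj
    have hjN : j < N + 1 := by
      by_contra hjN
      push_neg at hjN
      have hφ : (ε⁻¹)^2 < φ j := lt_of_lt_of_le hN (hmono N j (by omega))
      have hsq : ε⁻¹ < Real.sqrt (φ j) := (Real.lt_sqrt (by positivity)).2 hφ
      have hinv : (Real.sqrt (φ j))⁻¹ < ε := by
        have h1 : (0:ℝ) < ε⁻¹ := by positivity
        calc (Real.sqrt (φ j))⁻¹ < (ε⁻¹)⁻¹ := by
              exact inv_strictAnti₀ h1 hsq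
          _ = ε := inv_inv ε
      apply hk
      apply hball
      rw [Metric.mem_ball, hval]
      simp only [dist_zero_right, Complex.norm_real, Real.norm_eq_abs]
      rw [abs_of_nonneg (by positivity)]
      exact hinv
    exact Set.mem_biUnion (Finset.mem_range.2 hjN) hj
  exact (Set.Finite.biUnion (Finset.range (N+1)).finite_toSet
    (fun j _ => cube_finite d j (mvec d j))).subset hsub


lemma cube_lower {d : ℕ} (hd : 0 < d) (p : ℝ) (hp : 0 < p) (j : ℕ) (c : ℝ≥0∞)
    (lam : (Fin d → ℤ) → ℂ)
    (hval : ∀ k : Fin d → ℤ, inCube d j (mvec d j) k → ENNReal.ofReal ‖lam k‖ ^ p = c) :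
    ((2:ℝ≥0∞) ^ (j*d) * c) ^ (1/p) ≤ localSum d p j (mvec d j) lam := by
  rw [localSum]
  apply ENNReal.rpow_le_rpow _ (by positivity)
  -- injection from (Fin d → Fin (2^j))
  set ι : (Fin d → Fin (2^j)) → {k : Fin d → ℤ // inCube d j (mvec d j) k} :=
    fun v => ⟨fun i => 2 ^ j * mvec d j i + (v i : ℤ), by
      intro i
      dsimp only
      constructor
      · have : (0:ℤ) ≤ (v i : ℤ) := Int.natCast_nonneg _
        linarith
      · have h1 : ((v i : ℕ) : ℤ) < (2:ℤ)^j := by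
          have := (v i).is_lt
          exact_mod_cast this
        have : 2 ^ j * (mvec d j i + 1) = 2 ^ j * mvec d j i + 2 ^ j := by ring
        rw [this]
        omega⟩ with hι
  have hinj : Function.Injective ι := by
    intro v w hvw
    funext i
    have := congrFun (Subtype.mk_eq_mk.1 hvw) i
    have h2 : ((v i : ℕ) : ℤ) = ((w i : ℕ) : ℤ) := by omega
    exact Fin.ext (by exact_mod_cast h2)
  calc (2:ℝ≥0∞) ^ (j*d) * c
      = ∑' _v : Fin d → Fin (2^j), c := by
        rw [tsum_fintype, Finset.sum_const, Finset.card_univ, Fintype.card_fun]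
        simp only [Fintype.card_fin, nsmul_eq_mul]
        congr 1
        push_cast
        rw [← pow_mul]
    _ = ∑' v : Fin d → Fin (2^j),
          ENNReal.ofReal ‖lam (ι v).1‖ ^ p := by
        apply tsum_congr
        intro v
        rw [hval _ (ι v).2]
    _ ≤ ∑' k : {k : Fin d → ℤ // inCube d j (mvec d j) k},
          ENNReal.ofReal ‖lam k.1‖ ^ p :=
        ENNReal.tsum_comp_le_tsum_of_injective hinj _

lemma sqrt_le_mnorm {d : ℕ} (hd : 0 < d) (p : ℝ) (hp : 0 < p) (φ : ℕ → ℝ)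
    (hpos : ∀ k, 0 < φ k) (j : ℕ) :
    ENNReal.ofReal (Real.sqrt (φ j)) ≤ mNorm d p φ (lam1 d φ) := by
  have key : ENNReal.ofReal (Real.sqrt (φ j)) ≤
      ENNReal.ofReal (φ j) * (2 : ℝ≥0∞) ^ (-((j : ℝ) * d) / p) *
        localSum d p j (mvec d j) (lam1 d φ) := by
    set c : ℝ≥0∞ := ENNReal.ofReal ((Real.sqrt (φ j))⁻¹) ^ p with hc
    have hval : ∀ k : Fin d → ℤ, inCube d j (mvec d j) k →
        ENNReal.ofReal ‖lam1 d φ k‖ ^ p = c := by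
      intro k hk
      rw [lam1_of_mem hd φ hk]
      simp only [Complex.norm_real, Real.norm_eq_abs]
      rw [abs_of_nonneg (by positivity)]
    have hls := cube_lower hd p hp j c (lam1 d φ) hval
    have harith : ((2:ℝ≥0∞) ^ (j*d) * c) ^ (1/p)
        = (2:ℝ≥0∞) ^ (((j:ℝ) * d) / p) * ENNReal.ofReal ((Real.sqrt (φ j))⁻¹) := by
      rw [ENNReal.mul_rpow_of_nonneg _ _ (by positivity), hc]
      congr 1
      · rw [← ENNReal.rpow_natCast 2 (j*d), ← ENNReal.rpow_mul]
        congr 1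
        push_cast
        field_simp
      · rw [← ENNReal.rpow_mul]
        rw [mul_one_div_cancel hp.ne', ENNReal.rpow_one]
    calc ENNReal.ofReal (Real.sqrt (φ j))
        = ENNReal.ofReal (φ j) * ENNReal.ofReal ((Real.sqrt (φ j))⁻¹) := by
          rw [← ENNReal.ofReal_mul (le_of_lt (hpos j))]
          congr 1
          rw [eq_comm, ← div_eq_mul_inv, div_eq_iff (Real.sqrt_pos.2 (hpos j)).ne',
            Real.mul_self_sqrt (hpos j).le]
      _ = ENNReal.ofReal (φ j) *
            (((2:ℝ≥0∞) ^ (-((j : ℝ) * d) / p) * (2:ℝ≥0∞) ^ (((j:ℝ) * d) / p)) *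
              ENNReal.ofReal ((Real.sqrt (φ j))⁻¹)) := by
          rw [← ENNReal.rpow_add _ _ (by norm_num) (by norm_num)]
          rw [neg_div, neg_add_cancel, ENNReal.rpow_zero, one_mul]
      _ = ENNReal.ofReal (φ j) * (2 : ℝ≥0∞) ^ (-((j : ℝ) * d) / p) *
            ((2:ℝ≥0∞) ^ (((j:ℝ) * d) / p) * ENNReal.ofReal ((Real.sqrt (φ j))⁻¹)) := by
          ring
      _ ≤ _ := by
          rw [← harith]
          exact mul_le_mul_right hls _
  calc ENNReal.ofReal (Real.sqrt (φ j)) ≤ _ := key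
    _ ≤ mNorm d p φ (lam1 d φ) := by
        rw [mNorm]
        exact le_iSup₂_of_le j (mvec d j) le_rfl

lemma part1 {d : ℕ} (hd : 0 < d) (p : ℝ) (hp : 0 < p) (φ : ℕ → ℝ)
    (hpos : ∀ k, 0 < φ k) (hunb : ∀ C : ℝ, ∃ k, C < φ k) :
    mNorm d p φ (lam1 d φ) = ⊤ := by
  by_contra hne
  set M := mNorm d p φ (lam1 d φ) with hM
  have hub : ∀ j, Real.sqrt (φ j) ≤ M.toReal := by
    intro j
    have := sqrt_le_mnorm hd p hp φ hpos j
    exact (ENNReal.ofReal_le_iff_le_toReal hne).1 this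
  obtain ⟨k, hk⟩ := hunb ((M.toReal)^2)
  have h1 : Real.sqrt ((M.toReal)^2) < Real.sqrt (φ k) := by
    apply Real.sqrt_lt_sqrt (by positivity) hk
  rw [Real.sqrt_sq ENNReal.toReal_nonneg] at h1
  exact absurd (hub k) (not_le.2 h1)



def Hf (d : ℕ) (p : ℝ) (φ : ℕ → ℝ) (j : ℕ) : ℝ := 2 ^ (j * d) / φ j ^ p

lemma Hf_pos {d : ℕ} {p : ℝ} {φ : ℕ → ℝ} (hpos : ∀ k, 0 < φ k) (j : ℕ) :
    0 < Hf d p φ j := by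
  have := hpos j
  rw [Hf]
  positivity

lemma Hf_mono {d : ℕ} {p : ℝ} (hp : 0 < p) {φ : ℕ → ℝ} (hGp : Gp d p φ)
    {j k : ℕ} (hjk : j ≤ k) : Hf d p φ j ≤ Hf d p φ k := by
  have hpos := hGp.1
  rw [Hf, Hf, div_le_div_iff₀ (Real.rpow_pos_of_pos (hpos j) p)
    (Real.rpow_pos_of_pos (hpos k) p)]
  have h2 : φ k ≤ φ j * 2 ^ (((k:ℝ) - j) * d / p) := (hGp.2 j k hjk).2
  have h3 : φ k ^ p ≤ (φ j * 2 ^ (((k:ℝ) - j) * d / p)) ^ p :=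
    Real.rpow_le_rpow (hpos k).le h2 hp.le
  have h4 : (φ j * 2 ^ (((k:ℝ) - j) * d / p)) ^ p
      = φ j ^ p * 2 ^ ((k - j) * d : ℕ) := by
    rw [Real.mul_rpow (hpos j).le (by positivity)]
    congr 1
    rw [← Real.rpow_natCast 2 ((k - j) * d), ← Real.rpow_mul (by norm_num)]
    congr 1
    have : ((k:ℝ) - j) * d / p * p = ((k:ℝ) - j) * d := by field_simp
    rw [this]
    push_cast [Nat.cast_sub hjk]
    ring
  rw [h4] at h3
  calc (2:ℝ) ^ (j*d) * φ k ^ p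
      ≤ 2 ^ (j*d) * (φ j ^ p * 2 ^ ((k - j) * d)) :=
        mul_le_mul_of_nonneg_left h3 (by positivity)
    _ = 2 ^ (k*d) * φ j ^ p := by
        rw [mul_comm (φ j ^ p) _, ← mul_assoc, ← pow_add]
        congr 2
        rw [← add_mul, Nat.add_sub_cancel' hjk]

lemma Hf_unb {d : ℕ} {p : ℝ} (hp : 0 < p) {φ : ℕ → ℝ} (hpos : ∀ k, 0 < φ k)
    (hlim : Tendsto (fun k : ℕ => φ k * (2 : ℝ) ^ (-((k : ℝ) * d) / p))
      atTop (nhds 0)) :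
    ∀ C : ℝ, ∃ j, C ≤ Hf d p φ j := by
  intro C
  set g : ℕ → ℝ := fun k => φ k * (2 : ℝ) ^ (-((k : ℝ) * d) / p) with hg
  set D := max C 1 with hD
  have hD1 : (1:ℝ) ≤ D := le_max_right _ _
  have hDpos : (0:ℝ) < D := by linarith
  set ε : ℝ := (D⁻¹) ^ (1/p) with hε
  have hεpos : 0 < ε := Real.rpow_pos_of_pos (by positivity) _
  obtain ⟨k, hk⟩ := (Metric.tendsto_nhds.1 hlim ε hεpos).exists
  have hgpos : 0 < g k := by
    have := hpos k
    have : (0:ℝ) < (2:ℝ) ^ (-((k : ℝ) * d) / p) := Real.rpow_pos_of_pos (by norm_num) _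
    positivity
  rw [Real.dist_eq, sub_zero, abs_of_pos hgpos] at hk
  have h1 : g k ^ p < ε ^ p := Real.rpow_lt_rpow hgpos.le hk hp
  have h2 : ε ^ p = D⁻¹ := by
    rw [hε, ← Real.rpow_mul (by positivity), one_div_mul_cancel hp.ne', Real.rpow_one]
  have h3 : g k ^ p = φ k ^ p * ((2:ℝ) ^ (k*d))⁻¹ := by
    rw [hg]
    rw [Real.mul_rpow (hpos k).le (by positivity)]
    congr 1
    rw [← Real.rpow_natCast 2 (k*d), ← Real.rpow_neg (by norm_num),
      ← Real.rpow_mul (by norm_num)]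
    congr 1
    push_cast
    field_simp
  have h4 : Hf d p φ k = (g k ^ p)⁻¹ := by
    rw [h3, Hf]
    have hφp : (0:ℝ) < φ k ^ p := Real.rpow_pos_of_pos (hpos k) p
    field_simp
  refine ⟨k, ?_⟩
  rw [h4]
  have h5 : g k ^ p < D⁻¹ := h2 ▸ h1
  have h6 : (0:ℝ) < g k ^ p := Real.rpow_pos_of_pos hgpos p
  have h7 : D < (g k ^ p)⁻¹ := by
    calc D = (D⁻¹)⁻¹ := (inv_inv D).symm
      _ < (g k ^ p)⁻¹ := inv_strictAnti₀ h6 h5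
  exact le_of_lt (lt_of_le_of_lt (le_max_left C 1) h7)

def jf (H : ℕ → ℝ) (h : ∀ n : ℕ, ∃ j, (n:ℝ) + 2 ≤ H j) (n : ℕ) : ℕ :=
  Classical.choose (h n)

lemma jf_spec (H : ℕ → ℝ) (h : ∀ n : ℕ, ∃ j, (n:ℝ) + 2 ≤ H j) (n : ℕ) :
    (n:ℝ) + 2 ≤ H (jf H h n) := Classical.choose_spec (h n)

def aseq (H : ℕ → ℝ) (h : ∀ n : ℕ, ∃ j, (n:ℝ) + 2 ≤ H j) (n : ℕ) : ℤ :=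
  ∑ i ∈ Finset.range n, 2 ^ (jf H h i)

lemma aseq_strictMono (H h) : StrictMono (aseq H h) := by
  apply strictMono_nat_of_lt_succ
  intro n
  rw [aseq, aseq, Finset.sum_range_succ]
  have : (0:ℤ) < 2 ^ (jf H h n) := by positivity
  linarith

lemma aseq_nonneg (H h) (n : ℕ) : 0 ≤ aseq H h n :=
  Finset.sum_nonneg fun i _ => by positivity

lemma aseq_gap (H h) {n n' : ℕ} (hnn : n < n') :
    (2:ℤ) ^ (jf H h n) ≤ aseq H h n' - aseq H h n := by
  rw [aseq, aseq, ← Finset.sum_Ico_eq_sub _ hnn.le]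
  exact Finset.single_le_sum (f := fun i => (2:ℤ) ^ (jf H h i))
    (fun i _ => by positivity) (Finset.mem_Ico.2 ⟨le_refl n, hnn⟩)

def evec (d : ℕ) (a : ℕ → ℤ) (n : ℕ) : Fin d → ℤ := fun i => if i.val = 0 then a n else 0

open Classical in
def mu2 (d : ℕ) (a : ℕ → ℤ) : (Fin d → ℤ) → ℂ :=
  fun k => if ∃ n, evec d a n = k then 1 else 0

lemma mu2_01 (d : ℕ) (a : ℕ → ℤ) (k : Fin d → ℤ) : mu2 d a k = 0 ∨ mu2 d a k = 1 := by
  classical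
  rw [mu2]
  split <;> simp

lemma evec_injective {d : ℕ} (hd : 0 < d) {a : ℕ → ℤ} (ha : StrictMono a) :
    Function.Injective (evec d a) := by
  intro n n' hnn
  have := congrFun hnn ⟨0, hd⟩
  simp only [evec, if_pos rfl] at this
  exact ha.injective this

lemma mu2_not_conv {d : ℕ} (hd : 0 < d) {a : ℕ → ℤ} (ha : StrictMono a)
    (hnn : ∀ n, 0 ≤ a n) : ¬ ∃ c : ℂ, Tendsto (mu2 d a) cofinite (nhds c) := by
  classical
  rintro ⟨c, hc⟩
  have h1 := hc (Metric.ball_mem_nhds c (by norm_num : (0:ℝ) < 1/2))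
  rw [Filter.mem_map, Filter.mem_cofinite] at h1
  -- ones
  have hone : ∃ n : ℕ, mu2 d a (evec d a n) ∈ Metric.ball c (1/2) := by
    have hinf : (Set.range (evec d a)).Infinite :=
      Set.infinite_range_of_injective (evec_injective hd ha)
    obtain ⟨x, hx1, hx2⟩ := (hinf.diff h1).nonempty
    obtain ⟨n, rfl⟩ := hx1
    exact ⟨n, by simpa using hx2⟩
  -- zeros
  set κ : ℕ → (Fin d → ℤ) := fun t i => if i.val = 0 then -(t+1 : ℤ) else 0 with hκ
  have hκinj : Function.Injective κ := by
    intro t t' htt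
    have := congrFun htt ⟨0, hd⟩
    simp only [hκ, if_pos rfl] at this
    omega
  have hzero : ∃ t : ℕ, mu2 d a (κ t) ∈ Metric.ball c (1/2) := by
    have hinf : (Set.range κ).Infinite := Set.infinite_range_of_injective hκinj
    obtain ⟨x, hx1, hx2⟩ := (hinf.diff h1).nonempty
    obtain ⟨t, rfl⟩ := hx1
    exact ⟨t, by simpa using hx2⟩
  obtain ⟨n, hn⟩ := hone
  obtain ⟨t, ht⟩ := hzero
  have hμ1 : mu2 d a (evec d a n) = 1 := by rw [mu2, if_pos ⟨n, rfl⟩]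
  have hμ0 : mu2 d a (κ t) = 0 := by
    rw [mu2, if_neg]
    rintro ⟨n', hn'⟩
    have := congrFun hn' ⟨0, hd⟩
    simp only [evec, hκ, if_pos rfl] at this
    have := hnn n'
    omega
  rw [hμ1, Metric.mem_ball] at hn
  rw [hμ0, Metric.mem_ball] at ht
  have : dist (1:ℂ) 0 ≤ dist (1:ℂ) c + dist c 0 := dist_triangle _ _ _
  rw [dist_comm c 0] at this
  have h10 : dist (1:ℂ) (0:ℂ) = 1 := by simp
  rw [h10] at this
  linarith

lemma pair_lemma {d : ℕ} (hd : 0 < d) (H : ℕ → ℝ) (h : ∀ n : ℕ, ∃ j, (n:ℝ) + 2 ≤ H j)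
    {j : ℕ} {m : Fin d → ℤ} {n n' : ℕ} (hlt : n < n')
    (hn : inCube d j m (evec d (aseq H h) n))
    (hn' : inCube d j m (evec d (aseq H h) n')) : jf H h n < j := by
  have e1 := hn ⟨0, hd⟩
  have e2 := hn' ⟨0, hd⟩
  simp only [evec, if_pos rfl, if_true, eq_self_iff_true] at e1 e2
  norm_num at e1 e2
  have hgap := aseq_gap H h hlt
  have hexp : (2:ℤ) ^ j * (m ⟨0, hd⟩ + 1) = 2 ^ j * m ⟨0, hd⟩ + 2 ^ j := by ring
  have hlt2 : (2:ℤ) ^ (jf H h n) < 2 ^ j := by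
    rw [hexp] at e2
    linarith [e1.1, e2.2]
  exact (pow_lt_pow_iff_right₀ (by norm_num : (1:ℤ) < 2)).1 hlt2

lemma small_mem (H : ℕ → ℝ) (h : ∀ n : ℕ, ∃ j, (n:ℝ) + 2 ≤ H j)
    (hmono : ∀ j k : ℕ, j ≤ k → H j ≤ H k) {n j : ℕ} (hsm : jf H h n < j) :
    n < ⌊H j⌋₊ := by
  have h1 : (n:ℝ) + 2 ≤ H (jf H h n) := jf_spec H h n
  have h2 : (n:ℝ) + 2 ≤ H j := h1.trans (hmono _ _ hsm.le)
  have h3 : (n + 2 : ℕ) ≤ ⌊H j⌋₊ := Nat.le_floor (by push_cast; linarith)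
  omega

lemma exists_finset {d : ℕ} (hd : 0 < d) (H : ℕ → ℝ)
    (h : ∀ n : ℕ, ∃ j, (n:ℝ) + 2 ≤ H j)
    (hmono : ∀ j k : ℕ, j ≤ k → H j ≤ H k) (j : ℕ) (m : Fin d → ℤ) :
    ∃ F : Finset ℕ, {n : ℕ | inCube d j m (evec d (aseq H h) n)} ⊆ ↑F ∧
      F.card ≤ ⌊H j⌋₊ + 1 := by
  classical
  by_cases hbig : ∃ n₀, inCube d j m (evec d (aseq H h) n₀) ∧ j ≤ jf H h n₀
  · obtain ⟨n₀, hn₀, hjn₀⟩ := hbig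
    refine ⟨insert n₀ (Finset.range ⌊H j⌋₊), ?_, ?_⟩
    · intro n hn
      rw [Finset.mem_coe, Finset.mem_insert, Finset.mem_range]
      rcases lt_trichotomy n n₀ with hlt | heq | hgt
      · exact Or.inr (small_mem H h hmono (pair_lemma hd H h hlt hn hn₀))
      · exact Or.inl heq
      · exact absurd (pair_lemma hd H h hgt hn₀ hn) (by omega)
    · calc (insert n₀ (Finset.range ⌊H j⌋₊)).card ≤ (Finset.range ⌊H j⌋₊).card + 1 :=
            Finset.card_insert_le _ _
        _ = ⌊H j⌋₊ + 1 := by rw [Finset.card_range]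
  · push_neg at hbig
    refine ⟨Finset.range ⌊H j⌋₊, ?_, by simp⟩
    intro n hn
    rw [Finset.mem_coe, Finset.mem_range]
    exact small_mem H h hmono (hbig n hn)

lemma inner_le {d : ℕ} {p : ℝ} (hp : 0 < p) (a : ℕ → ℤ) (ha : StrictMono a)
    (hd : 0 < d) (j : ℕ) (m : Fin d → ℤ) (F : Finset ℕ)
    (hF : {n : ℕ | inCube d j m (evec d a n)} ⊆ ↑F) :
    (∑' k : {k : Fin d → ℤ // inCube d j m k}, ENNReal.ofReal ‖mu2 d a k.1‖ ^ p)
      ≤ (F.card : ℝ≥0∞) := by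
  classical
  set S : Set (Fin d → ℤ) := {k | inCube d j m k} with hS
  set R : Set (Fin d → ℤ) := Set.range (evec d a) with hR
  set T : Set ℕ := {n | inCube d j m (evec d a n)} with hT
  have hpt : ∀ k : Fin d → ℤ, ENNReal.ofReal ‖mu2 d a k‖ ^ p
      = R.indicator (fun _ => (1:ℝ≥0∞)) k := by
    intro k
    by_cases hk : ∃ n, evec d a n = k
    · rw [mu2, if_pos hk, Set.indicator_of_mem (show k ∈ R from hk)]
      simp [ENNReal.one_rpow]
    · rw [mu2, if_neg hk, Set.indicator_of_notMem (show k ∉ R from hk)]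
      simp [ENNReal.zero_rpow_of_pos hp]
  have hSR : S ∩ R = evec d a '' T := by
    ext k
    constructor
    · rintro ⟨hk1, n, rfl⟩
      exact ⟨n, hk1, rfl⟩
    · rintro ⟨n, hn, rfl⟩
      exact ⟨hn, n, rfl⟩
  calc (∑' k : {k : Fin d → ℤ // inCube d j m k}, ENNReal.ofReal ‖mu2 d a k.1‖ ^ p)
      = ∑' k : S, R.indicator (fun _ => (1:ℝ≥0∞)) k.1 := tsum_congr fun k => hpt k.1
    _ = ∑' k : Fin d → ℤ, S.indicator (R.indicator fun _ => (1:ℝ≥0∞)) k :=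
        tsum_subtype S _
    _ = ∑' k : Fin d → ℤ, (S ∩ R).indicator (fun _ => (1:ℝ≥0∞)) k := by
        simp_rw [Set.indicator_indicator]
    _ = ∑' k : Fin d → ℤ, (evec d a '' T).indicator (fun _ => (1:ℝ≥0∞)) k := by
        rw [hSR]
    _ = ∑' _x : (evec d a '' T), (1:ℝ≥0∞) := (tsum_subtype _ _).symm
    _ = ∑' _x : T, (1:ℝ≥0∞) := by
        exact tsum_image (fun _ => (1:ℝ≥0∞)) ((evec_injective hd ha).injOn)
    _ = ∑' n : ℕ, T.indicator (fun _ => (1:ℝ≥0∞)) n := by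
        exact tsum_subtype T fun _ => (1:ℝ≥0∞)
    _ ≤ ∑' n : ℕ, (↑F : Set ℕ).indicator (fun _ => (1:ℝ≥0∞)) n :=
        ENNReal.tsum_le_tsum fun n =>
          Set.indicator_le_indicator_of_subset hF (fun _ => zero_le) n
    _ = ∑ n ∈ F, (↑F : Set ℕ).indicator (fun _ => (1:ℝ≥0∞)) n :=
        tsum_eq_sum fun b hb => Set.indicator_of_notMem (by simpa using hb) _
    _ = ∑ _n ∈ F, (1:ℝ≥0∞) :=
        Finset.sum_congr rfl fun n hn =>
          Set.indicator_of_mem (Finset.mem_coe.2 hn) _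
    _ = (F.card : ℝ≥0∞) := by simp

lemma part2_norm {d : ℕ} (hd : 0 < d) {p : ℝ} (hp : 0 < p) {φ : ℕ → ℝ}
    (hGp : Gp d p φ)
    (hex : ∀ n : ℕ, ∃ j, (n:ℝ) + 2 ≤ Hf d p φ j) :
    mNorm d p φ (mu2 d (aseq (Hf d p φ) hex))
      ≤ ENNReal.ofReal ((1 + (Hf d p φ 0)⁻¹) ^ (1/p)) := by
  have hpos := hGp.1
  have hH0 : 0 < Hf d p φ 0 := Hf_pos hpos 0
  set H := Hf d p φ with hHdef
  set C₀ : ℝ := 1 + (H 0)⁻¹ with hC₀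
  have hC₀pos : 0 < C₀ := by
    rw [hC₀]
    positivity
  have hmono : ∀ j k : ℕ, j ≤ k → H j ≤ H k := fun j k hjk => Hf_mono hp hGp hjk
  rw [mNorm]
  apply iSup₂_le
  intro j m
  have hHj : 0 < H j := Hf_pos hpos j
  obtain ⟨F, hF, hcard⟩ := exists_finset hd H hex hmono j m
  -- bound on the inner tsum
  have h1 := inner_le hp (aseq H hex) (aseq_strictMono H hex) hd j m F hF
  have h2 : (F.card : ℝ≥0∞) ≤ ENNReal.ofReal (C₀ * H j) := by
    rw [← ENNReal.ofReal_natCast]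
    apply ENNReal.ofReal_le_ofReal
    have hfl : (⌊H j⌋₊ : ℝ) ≤ H j := Nat.floor_le hHj.le
    have hcr : (F.card : ℝ) ≤ (⌊H j⌋₊ : ℝ) + 1 := by exact_mod_cast hcard
    have hge : 1 ≤ H j * (H 0)⁻¹ := by
      rw [← div_eq_mul_inv, le_div_iff₀ hH0, one_mul]
      exact hmono 0 j (Nat.zero_le j)
    have he : C₀ * H j = H j + (H 0)⁻¹ * H j := by rw [hC₀]; ring
    have hge' : (1:ℝ) ≤ (H 0)⁻¹ * H j := by linarith [hge]
    calc (F.card : ℝ) ≤ H j + 1 := by linarith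
      _ ≤ H j + (H 0)⁻¹ * H j := by linarith
      _ = C₀ * H j := he.symm
  have hls : localSum d p j m (mu2 d (aseq H hex))
      ≤ ENNReal.ofReal (C₀ * H j) ^ (1/p) := by
    rw [localSum]
    exact ENNReal.rpow_le_rpow (h1.trans h2) (by positivity)
  -- rewrite the rpow of the bound
  have hHrpow : (H j) ^ (1/p) = (2:ℝ) ^ (((j*d : ℕ):ℝ)/p) / φ j := by
    rw [hHdef, Hf, Real.div_rpow (by positivity) (Real.rpow_nonneg (hpos j).le p)]
    congr 1
    · rw [← Real.rpow_natCast 2 (j*d), ← Real.rpow_mul (by norm_num)]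
      congr 1
      ring
    · rw [← Real.rpow_mul (hpos j).le, mul_one_div_cancel hp.ne', Real.rpow_one]
  have hsplit : ENNReal.ofReal (C₀ * H j) ^ (1/p)
      = ENNReal.ofReal (C₀ ^ (1/p)) *
          ENNReal.ofReal ((2:ℝ) ^ (((j*d : ℕ):ℝ)/p) / φ j) := by
    rw [ENNReal.ofReal_rpow_of_pos (by positivity),
      Real.mul_rpow hC₀pos.le hHj.le, hHrpow,
      ENNReal.ofReal_mul (by positivity)]
  -- final computation
  calc ENNReal.ofReal (φ j) * (2 : ℝ≥0∞) ^ (-((j : ℝ) * d) / p) *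
        localSum d p j m (mu2 d (aseq H hex))
      ≤ ENNReal.ofReal (φ j) * (2 : ℝ≥0∞) ^ (-((j : ℝ) * d) / p) *
        (ENNReal.ofReal (C₀ ^ (1/p)) *
          ENNReal.ofReal ((2:ℝ) ^ (((j*d : ℕ):ℝ)/p) / φ j)) := by
        rw [← hsplit]
        exact mul_le_mul_right hls _
    _ = ENNReal.ofReal (C₀ ^ (1/p)) *
        ((ENNReal.ofReal (φ j) * ENNReal.ofReal ((2:ℝ) ^ (((j*d : ℕ):ℝ)/p) / φ j)) *
          (2 : ℝ≥0∞) ^ (-((j : ℝ) * d) / p)) := by ring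
    _ = ENNReal.ofReal (C₀ ^ (1/p)) *
        ((2 : ℝ≥0∞) ^ (((j:ℝ) * d) / p) * (2 : ℝ≥0∞) ^ (-((j : ℝ) * d) / p)) := by
        congr 2
        rw [← ENNReal.ofReal_mul (hpos j).le]
        have hμ : φ j * ((2:ℝ) ^ (((j*d : ℕ):ℝ)/p) / φ j) = (2:ℝ) ^ (((j*d : ℕ):ℝ)/p) := by
          rw [mul_comm]
          exact div_mul_cancel₀ _ (hpos j).ne'
        rw [hμ]
        rw [← ENNReal.ofReal_rpow_of_pos (by norm_num : (0:ℝ) < 2)]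
        rw [ENNReal.ofReal_ofNat]
        congr 1
        push_cast
        ring
    _ = ENNReal.ofReal (C₀ ^ (1/p)) := by
        rw [← ENNReal.rpow_add _ _ (by norm_num) (by norm_num)]
        rw [neg_div, add_neg_cancel, ENNReal.rpow_zero, mul_one]

theorem stmt_10 (d : ℕ) (hd : 0 < d) (p : ℝ) (hp : 0 < p)
    (φ : ℕ → ℝ) (hGp : Gp d p φ) (hunb : ∀ C : ℝ, ∃ k, C < φ k)
    (hlim : Tendsto (fun k : ℕ => φ k * (2 : ℝ) ^ (-((k : ℝ) * d) / p))
      atTop (nhds 0)) :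
    (∃ lam : (Fin d → ℤ) → ℂ, Tendsto lam cofinite (nhds 0) ∧
      mNorm d p φ lam = ⊤) ∧
    (∃ mu : (Fin d → ℤ) → ℂ, (∀ k, mu k = 0 ∨ mu k = 1) ∧
      mNorm d p φ mu < ⊤ ∧ ¬ ∃ c : ℂ, Tendsto mu cofinite (nhds c)) := by
  have hpos := hGp.1
  have hmono : ∀ j k : ℕ, j ≤ k → φ j ≤ φ k := fun j k h => (hGp.2 j k h).1
  constructor
  · exact ⟨lam1 d φ, lam1_tendsto hd φ hpos hmono hunb, part1 hd p hp φ hpos hunb⟩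
  · have hex : ∀ n : ℕ, ∃ j, (n:ℝ) + 2 ≤ Hf d p φ j :=
      fun n => Hf_unb hp hpos hlim ((n:ℝ) + 2)
    refine ⟨mu2 d (aseq (Hf d p φ) hex), mu2_01 _ _, ?_,
      mu2_not_conv hd (aseq_strictMono _ _) (aseq_nonneg _ _)⟩
    exact lt_of_le_of_lt (part2_norm hd hp hGp hex) ENNReal.ofReal_lt_top
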